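/- Let H be a graph on k vertices, let Γ be a graph, let U ⊆ V(Γ), let X ⊆ V(H) be a signature of H, and let f: X → V(Γ) be any function. Then the number of embeddings θ: H ↪ Γ satisfying θ(v) = f(v) for every v ∈ X and θ(v) ∈ U for every v ∈ V(H)∖X is at most E_{k−|X|}(|U|). -/

import Mathlib

universe u v

open Filter

/-- The Cayley graph of an additive abelian group `G` with connection set `Λ`:
distinct vertices `x y : G` are adjacent iff `x - y ∈ Λ` (for `Λ` with `Λ = -Λ`). -/
def cayleyGraph (G : Type u) [AddCommGroup G] (Λ : Set G) : SimpleGraph G where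
  Adj x y := x ≠ y ∧ x - y ∈ Λ ∧ y - x ∈ Λ
  symm := by
    constructor
    rintro x y ⟨h1, h2, h3⟩
    exact ⟨fun e => h1 e.symm, h3, h2⟩
  loopless := by
    constructor
    rintro x ⟨h1, -, -⟩
    exact h1 rfl

/-- `Λ` is a possible outcome of the random procedure: `0 ∉ Λ` and `Λ = -Λ`. -/
def IsSymmetricSubset {G : Type u} [AddCommGroup G] (Λ : Finset G) : Prop :=
  (0 : G) ∉ Λ ∧ ∀ g ∈ Λ, -g ∈ Λ

/-- The number of negation-pairs `{g, -g}` among the elements of `Λ`. -/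
noncomputable def pairCount {G : Type u} [AddCommGroup G] (Λ : Finset G) : ℕ :=
  letI := Classical.decEq G
  (Λ.image fun g => ({g, -g} : Finset G)).card

/-- The probability that the random procedure with parameter `p` (each pair
`{g, -g} ⊆ G \ {0}` is included independently with probability `p`) produces
exactly the symmetric set `Λ`. -/
noncomputable def lambdaWeight {G : Type u} [AddCommGroup G] [Fintype G] (p : ℝ)
    (Λ : Finset G) : ℝ :=
  letI := Classical.decEq G
  p ^ pairCount Λ * (1 - p) ^ (pairCount ((Finset.univ : Finset G).erase 0) - pairCount Λ)

open Classical in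
/-- The probability that the random set `Λ ⊆ G \ {0}` produced by the random procedure
with parameter `p` satisfies the predicate `P`. -/
noncomputable def lambdaProb (G : Type u) [AddCommGroup G] [Fintype G] (p : ℝ)
    (P : Finset G → Prop) : ℝ :=
  ∑ Λ : Finset G, if IsSymmetricSubset Λ ∧ P Λ then lambdaWeight p Λ else 0

/-- `emb(H, Γ)`: the number of graph embeddings of `H` into `Γ`. -/
noncomputable def embCount {α : Type u} {β : Type v} (H : SimpleGraph α)
    (Γ : SimpleGraph β) : ℕ :=
  Nat.card (H ↪g Γ)

/-- `emb(H, n)`: the maximum of `emb(H, Γ)` over all `n`-vertex graphs `Γ`. -/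
noncomputable def embMax {α : Type u} (H : SimpleGraph α) (n : ℕ) : ℕ :=
  sSup {m | ∃ Γ : SimpleGraph (Fin n), embCount H Γ = m}

/-- The number of vertex subsets of `Γ` inducing a copy of `H`. -/
noncomputable def indCount {α : Type u} {β : Type v} (H : SimpleGraph α)
    (Γ : SimpleGraph β) : ℕ :=
  Nat.card {s : Set β // Nonempty ((Γ.induce s) ≃g H)}

/-- `ind(H, n)`: the maximum number of induced copies of `H` in an `n`-vertex graph. -/
noncomputable def indMax {α : Type u} (H : SimpleGraph α) (n : ℕ) : ℕ :=
  sSup {m | ∃ Γ : SimpleGraph (Fin n), indCount H Γ = m}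

/-- `Γ` is a blow-up of `H` with (non-empty) parts `W i`, `i ∈ V(H)`. -/
def IsBlowupWith {α : Type u} {β : Type v} (H : SimpleGraph α) (Γ : SimpleGraph β)
    (W : α → Set β) : Prop :=
  (∀ i, (W i).Nonempty) ∧ (∀ x : β, ∃! i, x ∈ W i) ∧
    ∀ i j, i ≠ j → ∀ x ∈ W i, ∀ y ∈ W j, (Γ.Adj x y ↔ H.Adj i j)

/-- Auxiliary fuelled version of "balanced iterated blow-up". -/
def IsBIBAux {α : Type u} (H : SimpleGraph α) : ℕ → ∀ (β : Type v), SimpleGraph β → Prop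
  | 0, β, _ => Nat.card β < Nat.card α
  | n + 1, β, Γ =>
      Nat.card β < Nat.card α ∨
        ∃ W : α → Set β, IsBlowupWith H Γ W ∧
          (∀ i j, Nat.card (W i) ≤ Nat.card (W j) + 1) ∧
          ∀ i, IsBIBAux H n ↥(W i) (Γ.induce (W i))

/-- `Γ` is a balanced iterated blow-up of `H`: either `|V(Γ)| < |V(H)|`, or `Γ` is a
balanced blow-up of `H` each of whose parts induces a balanced iterated blow-up of `H`. -/
def IsBalancedIterBlowup {α : Type u} {β : Type v} (H : SimpleGraph α)
    (Γ : SimpleGraph β) : Prop :=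
  IsBIBAux H (Nat.card β + 1) β Γ

/-- `φ` is one of the `2k̃` rotations and reflections of a Cayley graph on `G`. -/
def IsRotOrRefl {G : Type u} [AddCommGroup G] (φ : G → G) : Prop :=
  (∃ g : G, ∀ x : G, φ x = x + g) ∨ ∃ g : G, ∀ x : G, φ x = -x + g

/-- A graph is prime if no subset `U` with `2 ≤ |U| < |V(H)|` is such that every vertex
outside `U` is complete to `U` or has no edges to `U`. -/
def IsPrimeGraph {α : Type u} (H : SimpleGraph α) : Prop :=
  ¬ ∃ U : Set α, 2 ≤ Nat.card U ∧ Nat.card U < Nat.card α ∧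
      ∀ x ∉ U, (∀ y ∈ U, H.Adj x y) ∨ ∀ y ∈ U, ¬ H.Adj x y

/-- A signature of `H`: distinct vertices outside `S` have distinct neighbourhoods in `S`. -/
def IsSignature {α : Type u} (H : SimpleGraph α) (S : Set α) : Prop :=
  ∀ v ∉ S, ∀ w ∉ S, v ≠ w → H.neighborSet v ∩ S ≠ H.neighborSet w ∩ S

/-- An `r`-super-signature of `H`. -/
def IsSuperSignature {α : Type u} (H : SimpleGraph α) (r : ℝ) (S : Set α) : Prop :=
  S.Nonempty ∧ ∀ v ∉ S, ∀ w ∉ S, v ≠ w →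
    r * (Nat.card S : ℝ) ≤
      (Nat.card ↥(symmDiff (H.neighborSet v) (H.neighborSet w) ∩ S) : ℝ)

/-- The Cayley graph `cayleyGraph G Λ` is `(q₀, δ₀)`-typical. -/
def IsTypical {G : Type u} [AddCommGroup G] [Fintype G] (Λ : Set G) (q₀ δ₀ : ℝ) : Prop :=
  (∀ v : G,
      q₀ * (Fintype.card G : ℝ) ≤ (Nat.card ((cayleyGraph G Λ).neighborSet v) : ℝ) ∧
        (Nat.card ((cayleyGraph G Λ).neighborSet v) : ℝ) ≤
          (1 - q₀) * (Fintype.card G : ℝ)) ∧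
    (∀ v w : G, v ≠ w →
      q₀ * (Fintype.card G : ℝ) ≤
        (Nat.card {u : G | u ≠ v ∧ u ≠ w ∧
          Xor' ((cayleyGraph G Λ).Adj u v) ((cayleyGraph G Λ).Adj u w)} : ℝ)) ∧
    (¬ ∃ X Y : Set G, Disjoint X Y ∧
      2 * (Fintype.card G : ℝ) ^ ((4 : ℝ) / 5) ≤ (Nat.card X : ℝ) ∧
      2 * (Fintype.card G : ℝ) ^ ((4 : ℝ) / 5) ≤ (Nat.card Y : ℝ) ∧
      ((∀ x ∈ X, ∀ y ∈ Y, (cayleyGraph G Λ).Adj x y) ∨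
        ∀ x ∈ X, ∀ y ∈ Y, ¬ (cayleyGraph G Λ).Adj x y)) ∧
    ∀ (X : Set G) (f : G → G),
      (1 - δ₀) * (Fintype.card G : ℝ) ≤ (Nat.card X : ℝ) →
      Set.InjOn f X →
      (∀ v ∈ X, ∀ w ∈ X, v ≠ w →
        ((cayleyGraph G Λ).Adj (f v) (f w) ↔ (cayleyGraph G Λ).Adj v w)) →
      ∃ φ : G → G, IsRotOrRefl φ ∧ Set.EqOn f φ X

/-- The induced subgraph of the Cayley graph `cayleyGraph G Λ` on the vertex set `K`
is a `(q, δ)`-reasonable induced subgraph. -/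
def IsReasonable {G : Type u} [AddCommGroup G] [Fintype G] (Λ K : Set G) (q δ : ℝ) : Prop :=
  IsPrimeGraph ((cayleyGraph G Λ).induce K) ∧
    (∀ v w : G, v ≠ w →
      q * (Nat.card K : ℝ) ≤
        (Nat.card {u : G | u ∈ K ∧ u ≠ v ∧ u ≠ w ∧
          Xor' ((cayleyGraph G Λ).Adj u v) ((cayleyGraph G Λ).Adj u w)} : ℝ)) ∧
    ∀ (X : Set G) (f : G → G),
      (1 - δ) * (Nat.card K : ℝ) ≤ (Nat.card X : ℝ) →
      Set.InjOn f X →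
      (∀ v ∈ X, ∀ w ∈ X, v ≠ w →
        ((cayleyGraph G Λ).Adj (f v) (f w) ↔ (cayleyGraph G Λ).Adj v w)) →
      ∃ φ : G → G, IsRotOrRefl φ ∧ Set.EqOn f φ X

/-- `E_ℓ(m) = m₁ ⋯ m_ℓ` where `⌈m/ℓ⌉ ≥ m₁ ≥ … ≥ m_ℓ ≥ ⌊m/ℓ⌋` and `m₁ + … + m_ℓ = m`. -/
def Epart (ℓ m : ℕ) : ℕ := (m / ℓ + 1) ^ (m % ℓ) * (m / ℓ) ^ (ℓ - m % ℓ)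

/-- The rotation `y ↦ y + g` of a Cayley graph on `G`. -/
def rotationMap {G : Type u} [AddCommGroup G] (g : G) : G → G := fun y => y + g

/-- The reflection `y ↦ -y + g` of a Cayley graph on `G`. -/
def reflectionMap {G : Type u} [AddCommGroup G] (g : G) : G → G := fun y => -y + g

/-- The family of the `2k̃` rotations and reflections, indexed by `Bool × G`. -/
def rotRefl {G : Type u} [AddCommGroup G] : Bool × G → G → G
  | (false, g) => rotationMap g
  | (true, g) => reflectionMap g

lemma epart_zero (m : ℕ) : Epart 0 m = 1 := by
  simp [Epart]

lemma epart_one (m : ℕ) : Epart 1 m = m := by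
  simp [Epart, Nat.mod_one]

lemma epart_succ_mul {ℓ : ℕ} (hℓ : 0 < ℓ) (s : ℕ) :
    (s / ℓ) * Epart ℓ (s + 1) = (s / ℓ + 1) * Epart ℓ s := by
  have hdm : ℓ * (s / ℓ) + s % ℓ = s := Nat.div_add_mod s ℓ
  have hr : s % ℓ < ℓ := Nat.mod_lt _ hℓ
  rcases lt_or_eq_of_le (Nat.succ_le_of_lt hr) with h | h
  · have h1 : (s + 1) / ℓ = s / ℓ ∧ (s + 1) % ℓ = s % ℓ + 1 :=
      (Nat.div_mod_unique hℓ).mpr ⟨by omega, h⟩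
    have h2 : ℓ - s % ℓ = (ℓ - (s % ℓ + 1)) + 1 := by omega
    rw [Epart, Epart, h1.1, h1.2, h2, pow_succ, pow_succ]
    ring
  · have hexp : ℓ * (s / ℓ + 1) = ℓ * (s / ℓ) + ℓ := by ring
    have h1 : (s + 1) / ℓ = s / ℓ + 1 ∧ (s + 1) % ℓ = 0 :=
      (Nat.div_mod_unique hℓ).mpr ⟨by omega, hℓ⟩
    have h2 : ℓ - s % ℓ = 1 := by omega
    have h' : s % ℓ + 1 = ℓ := h
    rw [Epart, Epart, h1.1, h1.2, h2, pow_one, pow_zero, one_mul, Nat.sub_zero]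
    set q := s / ℓ
    set r := s % ℓ
    rw [← h', pow_succ]
    ring

lemma epart_step {ℓ : ℕ} (hℓ : 0 < ℓ) {s t : ℕ} (ht : t ≤ s / ℓ) :
    t * Epart ℓ (s + 1) ≤ (t + 1) * Epart ℓ s := by
  rcases Nat.eq_zero_or_pos (s / ℓ) with hq | hq
  · have : t = 0 := by omega
    simp [this]
  · have key := epart_succ_mul hℓ s
    have h3 : t * ((s / ℓ + 1) * Epart ℓ s) ≤ (s / ℓ) * ((t + 1) * Epart ℓ s) := by
      have h4 : t * (s / ℓ + 1) ≤ (s / ℓ) * (t + 1) := by nlinarith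
      calc t * ((s / ℓ + 1) * Epart ℓ s) = t * (s / ℓ + 1) * Epart ℓ s := by ring
        _ ≤ (s / ℓ) * (t + 1) * Epart ℓ s := Nat.mul_le_mul_right _ h4
        _ = (s / ℓ) * ((t + 1) * Epart ℓ s) := by ring
    have h5 : (s / ℓ) * (t * Epart ℓ (s + 1)) = t * ((s / ℓ + 1) * Epart ℓ s) := by
      rw [show (s / ℓ) * (t * Epart ℓ (s + 1)) = t * ((s / ℓ) * Epart ℓ (s + 1)) by ring, key]
    exact Nat.le_of_mul_le_mul_left (h5 ▸ h3) hq

lemma epart_pred {ℓ : ℕ} (hℓ : 2 ≤ ℓ) (m : ℕ) :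
    (m / ℓ) * Epart (ℓ - 1) (m - m / ℓ) = Epart ℓ m := by
  have hdm : ℓ * (m / ℓ) + m % ℓ = m := Nat.div_add_mod m ℓ
  have hr : m % ℓ < ℓ := Nat.mod_lt _ (by omega)
  have h6 : (ℓ - 1) * (m / ℓ) + (m / ℓ) = ℓ * (m / ℓ) := by
    have h7 : ℓ - 1 + 1 = ℓ := by omega
    calc (ℓ - 1) * (m / ℓ) + (m / ℓ) = (ℓ - 1 + 1) * (m / ℓ) := by ring
      _ = ℓ * (m / ℓ) := by rw [h7]
  have hq : m / ℓ ≤ ℓ * (m / ℓ) := Nat.le_mul_of_pos_left _ (by omega)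
  rcases lt_or_eq_of_le (Nat.le_sub_one_of_lt hr) with h | h
  · have h1 : (m - m / ℓ) / (ℓ - 1) = m / ℓ ∧ (m - m / ℓ) % (ℓ - 1) = m % ℓ :=
      (Nat.div_mod_unique (by omega)).mpr ⟨by omega, h⟩
    have h2 : ℓ - m % ℓ = ((ℓ - 1) - m % ℓ) + 1 := by omega
    rw [Epart, Epart, h1.1, h1.2, h2, pow_succ]
    ring
  · have h8 : (ℓ - 1) * (m / ℓ + 1) = (ℓ - 1) * (m / ℓ) + (ℓ - 1) := by ring
    have h1 : (m - m / ℓ) / (ℓ - 1) = m / ℓ + 1 ∧ (m - m / ℓ) % (ℓ - 1) = 0 :=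
      (Nat.div_mod_unique (by omega)).mpr ⟨by omega, by omega⟩
    have h2 : ℓ - m % ℓ = 1 := by omega
    have h3 : (ℓ - 1) - 0 = ℓ - 1 := by omega
    rw [Epart, Epart, h1.1, h1.2, h2, h3, pow_one, pow_zero, one_mul, ← h]
    ring

lemma epart_mul_le {ℓ : ℕ} (hℓ : 2 ≤ ℓ) (m t : ℕ) (ht : t ≤ m / ℓ) :
    t * Epart (ℓ - 1) (m - t) ≤ Epart ℓ m := by
  obtain ⟨d, hd⟩ : ∃ d, t + d = m / ℓ := ⟨m / ℓ - t, by omega⟩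
  clear ht
  induction d generalizing t with
  | zero =>
    have : t = m / ℓ := by omega
    subst this
    exact (epart_pred hℓ m).le
  | succ d ih =>
    rcases Nat.eq_zero_or_pos t with rfl | htpos
    · simp only [Nat.zero_mul]
      exact Nat.zero_le _
    · have hq : t + 1 ≤ m / ℓ := by omega
      have hm : ℓ * (t + 1) ≤ m := by
        calc ℓ * (t + 1) ≤ ℓ * (m / ℓ) := Nat.mul_le_mul_left ℓ hq
          _ ≤ m := Nat.mul_div_le m ℓ
      have hcm : ℓ * (t + 1) = ℓ * t + ℓ := by ring
      have hcm2 : t * ℓ = ℓ * t := Nat.mul_comm t ℓ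
      have hcm3 : t * (ℓ - 1) + t = t * ℓ := by
        have h7 : ℓ - 1 + 1 = ℓ := by omega
        calc t * (ℓ - 1) + t = t * (ℓ - 1 + 1) := by ring
          _ = t * ℓ := by rw [h7]
      have hs : t ≤ (m - (t + 1)) / (ℓ - 1) := by
        rw [Nat.le_div_iff_mul_le (by omega : 0 < ℓ - 1)]
        omega
      have hstep := epart_step (show 0 < ℓ - 1 by omega) hs
      have he : m - (t + 1) + 1 = m - t := by
        have h4 : t ≤ ℓ * t := Nat.le_mul_of_pos_left t (by omega)
        omega
      rw [he] at hstep
      exact le_trans hstep (ih (t + 1) (by omega))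

lemma prod_le_epart {γ : Type*} [DecidableEq γ] (n : γ → ℕ) :
    ∀ (c : ℕ) (s : Finset γ), s.card = c → ∀ m : ℕ,
      (∑ i ∈ s, n i) ≤ m → ∏ i ∈ s, n i ≤ Epart c m := by
  intro c
  induction c with
  | zero =>
    intro s hs m _
    rw [Finset.card_eq_zero] at hs
    subst hs
    simp [epart_zero]
  | succ c ih =>
    intro s hs m hsum
    have hne : s.Nonempty := Finset.card_pos.mp (by omega)
    obtain ⟨i₀, hi₀, hmin⟩ := s.exists_min_image n hne
    have hsum' : ∑ i ∈ s.erase i₀, n i + n i₀ = ∑ i ∈ s, n i := Finset.sum_erase_add s n hi₀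
    have hprod : (∏ i ∈ s.erase i₀, n i) * n i₀ = ∏ i ∈ s, n i := Finset.prod_erase_mul s n hi₀
    have hcard' : (s.erase i₀).card = c := by
      rw [Finset.card_erase_of_mem hi₀, hs]
      rfl
    have ihe := ih (s.erase i₀) hcard' (m - n i₀) (by omega)
    rcases Nat.eq_zero_or_pos c with rfl | hc
    · rw [Finset.card_eq_zero] at hcard'
      rw [← hprod, hcard', Finset.prod_empty, one_mul, epart_one]
      omega
    · have ht : n i₀ ≤ m / (c + 1) := by
        rw [Nat.le_div_iff_mul_le (by omega)]
        have hcs : s.card • n i₀ ≤ ∑ i ∈ s, n i := Finset.card_nsmul_le_sum s n _ hmin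
        rw [hs, smul_eq_mul] at hcs
        have : (c + 1) * n i₀ = n i₀ * (c + 1) := Nat.mul_comm _ _
        omega
      calc ∏ i ∈ s, n i = n i₀ * ∏ i ∈ s.erase i₀, n i := by rw [← hprod]; ring
        _ ≤ n i₀ * Epart c (m - n i₀) := Nat.mul_le_mul_left _ ihe
        _ = n i₀ * Epart ((c + 1) - 1) (m - n i₀) := rfl
        _ ≤ Epart (c + 1) m := epart_mul_le (by omega) m (n i₀) ht

/-- If `X` is a signature of `H` (a graph on `k` vertices), `f : X → V(Γ)`
is any function and `U ⊆ V(Γ)`, then the number of embeddings `θ : H ↪ Γ` with `θ = f`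
on `X` and `θ(v) ∈ U` for `v ∉ X` is at most `E_{k - |X|}(|U|)`. -/
theorem statement13 {α β : Type} [Finite α] [Finite β] (H : SimpleGraph α)
    (Γ : SimpleGraph β) (k : ℕ) (hk : Nat.card α = k) (U : Set β) (X : Set α)
    (hX : IsSignature H X) (f : α → β) :
    Nat.card {θ : H ↪g Γ // (∀ v ∈ X, θ v = f v) ∧ ∀ v ∉ X, θ v ∈ U} ≤
      Epart (k - Nat.card X) (Nat.card U) := by
  classical
  haveI : Fintype α := Fintype.ofFinite α
  haveI : Fintype β := Fintype.ofFinite β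
  set Uv : α → Set β := fun v => {u | u ∈ U ∧ ∀ x ∈ X, Γ.Adj u (f x) ↔ H.Adj v x} with hUv
  have hmap : ∀ θ : {θ : H ↪g Γ // (∀ v ∈ X, θ v = f v) ∧ ∀ v ∉ X, θ v ∈ U},
      ∀ v : ↥(Xᶜ), (θ.1 : α → β) ↑v ∈ Uv ↑v := by
    rintro ⟨θ, hθ1, hθ2⟩ ⟨v, hv⟩
    refine ⟨hθ2 v hv, fun x hx => ?_⟩
    rw [← hθ1 x hx]
    exact θ.map_adj_iff
  set F : {θ : H ↪g Γ // (∀ v ∈ X, θ v = f v) ∧ ∀ v ∉ X, θ v ∈ U} →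
      (∀ v : ↥(Xᶜ), ↥(Uv ↑v)) := fun θ v => ⟨θ.1 ↑v, hmap θ v⟩ with hF
  have hinj : Function.Injective F := by
    rintro θ θ' h
    apply Subtype.ext
    apply DFunLike.ext
    intro a
    by_cases ha : a ∈ X
    · rw [θ.2.1 a ha, θ'.2.1 a ha]
    · exact congrArg Subtype.val (congrFun h ⟨a, ha⟩)
  have h1 := Nat.card_le_card_of_injective F hinj
  rw [Nat.card_pi] at h1
  refine h1.trans ?_
  have hcard : (Finset.univ : Finset ↥(Xᶜ)).card = k - Nat.card X := by
    rw [Finset.card_univ, Fintype.card_compl_set, ← hk, Nat.card_eq_fintype_card,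
      Nat.card_eq_fintype_card]
  have hdj : ∀ v ∈ (Finset.univ : Finset ↥(Xᶜ)), ∀ w ∈ (Finset.univ : Finset ↥(Xᶜ)),
      v ≠ w → Disjoint (Uv ↑v).toFinset (Uv ↑w).toFinset := by
    rintro ⟨v, hv⟩ - ⟨w, hw⟩ - hne
    rw [Finset.disjoint_left]
    intro u hu hu'
    rw [Set.mem_toFinset] at hu hu'
    have hvw : v ≠ w := fun e => hne (Subtype.ext e)
    apply hX v hv w hw hvw
    ext y
    simp only [Set.mem_inter_iff, SimpleGraph.mem_neighborSet]
    constructor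
    · rintro ⟨hy, hyX⟩
      exact ⟨(hu'.2 y hyX).mp ((hu.2 y hyX).mpr hy), hyX⟩
    · rintro ⟨hy, hyX⟩
      exact ⟨(hu.2 y hyX).mp ((hu'.2 y hyX).mpr hy), hyX⟩
  have hsum : ∑ v : ↥(Xᶜ), Nat.card ↥(Uv ↑v) ≤ Nat.card ↥U := by
    have hcardeq : ∀ v : ↥(Xᶜ), Nat.card ↥(Uv ↑v) = (Uv ↑v).toFinset.card := fun v => by
      rw [Nat.card_eq_fintype_card, Set.toFinset_card]
    have hUc : Nat.card ↥U = U.toFinset.card := by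
      rw [Nat.card_eq_fintype_card, Set.toFinset_card]
    simp_rw [hcardeq, hUc]
    rw [← Finset.card_biUnion hdj]
    apply Finset.card_le_card
    intro u hu
    rw [Finset.mem_biUnion] at hu
    obtain ⟨v, -, hv⟩ := hu
    rw [Set.mem_toFinset] at hv
    rw [Set.mem_toFinset]
    exact hv.1
  exact prod_le_epart (fun v : ↥(Xᶜ) => Nat.card ↥(Uv ↑v)) (k - Nat.card X)
    Finset.univ hcard (Nat.card U) hsum
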